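/- A real n×n centrosymmetric matrix A has a real centrosymmetric logarithm if and only if both blocks A1 and A2 in the block-diagonalization S_n⁻¹ A S_n = diag(A1, A2) admit real logarithms. -/

import Mathlib

open Matrix

/-- The n×n exchange (anti-diagonal) matrix. -/
def exchangeMatrix (n : ℕ) : Matrix (Fin n) (Fin n) ℝ :=
  Matrix.of fun i j => if j = i.rev then 1 else 0

/-- The generalized Fourier matrix `S_n`: for the upper rows it has 1 at positions `i`
and `rev i`, the middle row (odd `n`) has a single 1, and the lower rows have 1 at
position `rev i` and -1 at position `i`. -/
def fourierMatrix (n : ℕ) : Matrix (Fin n) (Fin n) ℝ :=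
  Matrix.of fun i j =>
    if 2 * i.val + 1 < n then (if j = i ∨ j = i.rev then 1 else 0)
    else if 2 * i.val + 1 = n then (if j = i then 1 else 0)
    else (if j = i.rev then 1 else if j = i then -1 else 0)

namespace CentroAux

open NormedSpace

variable {n : ℕ}

lemma exchange_mul (M : Matrix (Fin n) (Fin n) ℝ) (i j : Fin n) :
    (exchangeMatrix n * M) i j = M i.rev j := by
  simp [Matrix.mul_apply, exchangeMatrix, ite_mul]

lemma rev_ne_self_of_upper {i : Fin n} (h : 2 * i.val + 1 < n) : i.rev ≠ i := by
  rw [Fin.ne_iff_vne, Fin.val_rev]; omega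

lemma fourier_mul (M : Matrix (Fin n) (Fin n) ℝ) (i j : Fin n) :
    (fourierMatrix n * M) i j =
      if 2 * i.val + 1 < n then M i j + M i.rev j
      else if 2 * i.val + 1 = n then M i j
      else M i.rev j - M i j := by
  rw [Matrix.mul_apply]
  split_ifs with h1 h2
  · have hne : i.rev ≠ i := rev_ne_self_of_upper h1
    have : ∀ l, fourierMatrix n i l * M l j
        = (if l = i then M l j else 0) + (if l = i.rev then M l j else 0) := by
      intro l
      simp only [fourierMatrix, of_apply, if_pos h1]
      by_cases hl1 : l = i <;> by_cases hl2 : l = i.rev <;> simp_all [hne.symm]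
    simp only [this, Finset.sum_add_distrib, Finset.sum_ite_eq', Finset.mem_univ, if_pos]
  · have : ∀ l, fourierMatrix n i l * M l j = (if l = i then M l j else 0) := by
      intro l
      simp only [fourierMatrix, of_apply, if_neg (by omega : ¬ 2*i.val+1 < n), if_pos h2]
      by_cases hl1 : l = i <;> simp_all
    simp only [this, Finset.sum_ite_eq', Finset.mem_univ, if_pos]
  · have hne : i.rev ≠ i := by rw [Fin.ne_iff_vne, Fin.val_rev]; have := i.isLt; omega
    have : ∀ l, fourierMatrix n i l * M l j
        = (if l = i.rev then M l j else 0) + (if l = i then -M l j else 0) := by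
      intro l
      simp only [fourierMatrix, of_apply, if_neg h1, if_neg h2]
      by_cases hl1 : l = i <;> by_cases hl2 : l = i.rev <;> simp_all [hne]
    simp only [this, Finset.sum_add_distrib, Finset.sum_ite_eq', Finset.mem_univ, if_pos]
    ring

lemma fourier_apply' (l j : Fin n) : fourierMatrix n l j =
    if 2 * j.val + 1 < n then (if l = j ∨ l = j.rev then 1 else 0)
    else if 2 * j.val + 1 = n then (if l = j then 1 else 0)
    else (if l = j.rev then 1 else if l = j then -1 else 0) := by
  have hl := l.isLt; have hj := j.isLt
  simp only [fourierMatrix, of_apply, Fin.ext_iff, Fin.val_rev]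
  split_ifs <;> first | rfl | omega

lemma mul_fourier (M : Matrix (Fin n) (Fin n) ℝ) (i j : Fin n) :
    (M * fourierMatrix n) i j =
      if 2 * j.val + 1 < n then M i j + M i j.rev
      else if 2 * j.val + 1 = n then M i j
      else M i j.rev - M i j := by
  rw [Matrix.mul_apply]
  simp only [fourier_apply' _ j]
  split_ifs with h1 h2
  · have hne : j.rev ≠ j := rev_ne_self_of_upper h1
    have : ∀ l, M i l * (if l = j ∨ l = j.rev then (1:ℝ) else 0)
        = (if l = j then M i l else 0) + (if l = j.rev then M i l else 0) := by
      intro l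
      by_cases hl1 : l = j <;> by_cases hl2 : l = j.rev <;> simp_all [hne.symm]
    simp only [this, Finset.sum_add_distrib, Finset.sum_ite_eq', Finset.mem_univ, if_pos]
  · have : ∀ l, M i l * (if l = j then (1:ℝ) else 0) = (if l = j then M i l else 0) := by
      intro l; by_cases hl1 : l = j <;> simp_all
    simp only [this, Finset.sum_ite_eq', Finset.mem_univ, if_pos]
  · have hne : j.rev ≠ j := by rw [Fin.ne_iff_vne, Fin.val_rev]; have := j.isLt; omega
    have : ∀ l, M i l * (if l = j.rev then (1:ℝ) else if l = j then -1 else 0)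
        = (if l = j.rev then M i l else 0) + (if l = j then -M i l else 0) := by
      intro l
      by_cases hl1 : l = j <;> by_cases hl2 : l = j.rev <;> simp_all [hne]
    simp only [this, Finset.sum_add_distrib, Finset.sum_ite_eq', Finset.mem_univ, if_pos]
    ring

/-- Explicit inverse of the Fourier matrix. -/
noncomputable def finv (n : ℕ) : Matrix (Fin n) (Fin n) ℝ :=
  Matrix.of fun i j => (if 2 * j.val + 1 = n then 1 else 2⁻¹) * fourierMatrix n j i

lemma finv_mul : finv n * fourierMatrix n = 1 := by
  ext i j
  rw [mul_fourier]
  have hi := i.isLt; have hj := j.isLt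
  simp only [finv, fourierMatrix, of_apply, Matrix.one_apply, Fin.ext_iff, Fin.val_rev]
  split_ifs <;> first | omega | norm_num

lemma mul_finv : fourierMatrix n * finv n = 1 := by
  ext i j
  rw [fourier_mul]
  have hi := i.isLt; have hj := j.isLt
  simp only [finv, fourierMatrix, of_apply, Matrix.one_apply, Fin.ext_iff, Fin.val_rev]
  split_ifs <;> first | omega | norm_num

/-- The diagonal sign matrix. -/
noncomputable def sgn (n : ℕ) : Matrix (Fin n) (Fin n) ℝ :=
  Matrix.diagonal fun j => if (j : ℕ) < (n + 1) / 2 then 1 else -1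

lemma exchange_fourier : exchangeMatrix n * fourierMatrix n = fourierMatrix n * sgn n := by
  ext i j
  rw [exchange_mul]
  simp only [sgn, Matrix.mul_diagonal]
  have hi := i.isLt; have hj := j.isLt
  simp only [fourierMatrix, of_apply, Fin.ext_iff, Fin.val_rev, Fin.rev_rev]
  split_ifs <;> first | omega | norm_num

lemma finv_exchange : finv n * exchangeMatrix n = sgn n * finv n := by
  calc finv n * exchangeMatrix n
      = finv n * exchangeMatrix n * (fourierMatrix n * finv n) := by rw [mul_finv, mul_one]
    _ = finv n * (exchangeMatrix n * fourierMatrix n) * finv n := by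
        simp only [Matrix.mul_assoc]
    _ = finv n * (fourierMatrix n * sgn n) * finv n := by rw [exchange_fourier]
    _ = (finv n * fourierMatrix n) * (sgn n * finv n) := by simp only [Matrix.mul_assoc]
    _ = sgn n * finv n := by rw [finv_mul, one_mul]

def IsBlocky (M : Matrix (Fin n) (Fin n) ℝ) : Prop :=
  ∀ i j : Fin n, ¬((i : ℕ) < (n + 1) / 2 ↔ (j : ℕ) < (n + 1) / 2) → M i j = 0

lemma sgn_conj_of_blocky {M : Matrix (Fin n) (Fin n) ℝ} (h : IsBlocky M) :
    sgn n * M * sgn n = M := by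
  ext i j
  simp only [sgn, Matrix.diagonal_mul, Matrix.mul_diagonal]
  by_cases h1 : (i : ℕ) < (n + 1) / 2 <;> by_cases h2 : (j : ℕ) < (n + 1) / 2
  · simp [h1, h2]
  · rw [h i j (by tauto)]; simp
  · rw [h i j (by tauto)]; simp
  · simp [h1, h2]

lemma blocky_of_sgn_conj {M : Matrix (Fin n) (Fin n) ℝ} (h : sgn n * M * sgn n = M) :
    IsBlocky M := by
  intro i j hij
  have h' := congrArg (fun X => X i j) h
  simp only [sgn, Matrix.diagonal_mul, Matrix.mul_diagonal] at h'
  by_cases h1 : (i : ℕ) < (n + 1) / 2 <;> by_cases h2 : (j : ℕ) < (n + 1) / 2 <;>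
    simp [h1, h2] at h' hij <;> linarith

lemma blocky_conj (M : Matrix (Fin n) (Fin n) ℝ)
    (hM : exchangeMatrix n * M * exchangeMatrix n = M) :
    IsBlocky (finv n * M * fourierMatrix n) := by
  apply blocky_of_sgn_conj
  calc sgn n * (finv n * M * fourierMatrix n) * sgn n
      = (sgn n * finv n) * M * (fourierMatrix n * sgn n) := by simp only [Matrix.mul_assoc]
    _ = (finv n * exchangeMatrix n) * M * (exchangeMatrix n * fourierMatrix n) := by
        rw [finv_exchange, exchange_fourier]
    _ = finv n * (exchangeMatrix n * M * exchangeMatrix n) * fourierMatrix n := by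
        simp only [Matrix.mul_assoc]
    _ = finv n * M * fourierMatrix n := by rw [hM]

lemma conj_blocky (G : Matrix (Fin n) (Fin n) ℝ) (hG : IsBlocky G) :
    exchangeMatrix n * (fourierMatrix n * G * finv n) * exchangeMatrix n
      = fourierMatrix n * G * finv n := by
  calc exchangeMatrix n * (fourierMatrix n * G * finv n) * exchangeMatrix n
      = (exchangeMatrix n * fourierMatrix n) * G * (finv n * exchangeMatrix n) := by
        simp only [Matrix.mul_assoc]
    _ = (fourierMatrix n * sgn n) * G * (sgn n * finv n) := by
        rw [exchange_fourier, finv_exchange]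
    _ = fourierMatrix n * (sgn n * G * sgn n) * finv n := by simp only [Matrix.mul_assoc]
    _ = fourierMatrix n * G * finv n := by rw [sgn_conj_of_blocky hG]

def blockEquiv (n : ℕ) : Fin ((n + 1) / 2) ⊕ Fin (n - (n + 1) / 2) ≃ Fin n :=
  finSumFinEquiv.trans (finCongr (by omega))

lemma blockEquiv_inl_val (i : Fin ((n + 1) / 2)) :
    ((blockEquiv n (Sum.inl i)) : ℕ) = i := by
  simp [blockEquiv]

lemma blockEquiv_inr_val (i : Fin (n - (n + 1) / 2)) :
    ((blockEquiv n (Sum.inr i)) : ℕ) = (n + 1) / 2 + i := by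
  simp [blockEquiv]

noncomputable def toB (M : Matrix (Fin n) (Fin n) ℝ) :
    Matrix (Fin ((n + 1) / 2) ⊕ Fin (n - (n + 1) / 2))
      (Fin ((n + 1) / 2) ⊕ Fin (n - (n + 1) / 2)) ℝ :=
  M.submatrix (blockEquiv n) (blockEquiv n)

lemma toB_eq_fromBlocks {M : Matrix (Fin n) (Fin n) ℝ} (h : IsBlocky M) :
    toB M = Matrix.fromBlocks (toB M).toBlocks₁₁ 0 0 (toB M).toBlocks₂₂ := by
  ext (i | i) (j | j)
  · rfl
  · have : toB M (Sum.inl i) (Sum.inr j) = 0 := by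
      apply h
      rw [blockEquiv_inl_val, blockEquiv_inr_val]
      have := i.isLt; omega
    simpa [toB] using this
  · have : toB M (Sum.inr i) (Sum.inl j) = 0 := by
      apply h
      rw [blockEquiv_inl_val, blockEquiv_inr_val]
      have := j.isLt; omega
    simpa [toB] using this
  · rfl

lemma untoB (M : Matrix (Fin n) (Fin n) ℝ) :
    (toB M).submatrix (blockEquiv n).symm (blockEquiv n).symm = M := by
  simp [toB, Matrix.submatrix_submatrix, Equiv.self_comp_symm]

lemma blocky_of_toB {M : Matrix (Fin n) (Fin n) ℝ}
    {X Y} (h : toB M = Matrix.fromBlocks X 0 0 Y) : IsBlocky M := by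
  intro i j hij
  have hM : M i j = toB M ((blockEquiv n).symm i) ((blockEquiv n).symm j) := by
    simp [toB]
  rw [hM, h]
  rcases h1 : (blockEquiv n).symm i with p | p <;> rcases h2 : (blockEquiv n).symm j with q | q
  · exfalso
    have e1 : ((blockEquiv n) (Sum.inl p) : ℕ) = i := by rw [← h1]; simp
    have e2 : ((blockEquiv n) (Sum.inl q) : ℕ) = j := by rw [← h2]; simp
    rw [blockEquiv_inl_val] at e1 e2
    have := p.isLt; have := q.isLt; omega
  · rfl
  · rfl
  · exfalso
    have e1 : ((blockEquiv n) (Sum.inr p) : ℕ) = i := by rw [← h1]; simp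
    have e2 : ((blockEquiv n) (Sum.inr q) : ℕ) = j := by rw [← h2]; simp
    rw [blockEquiv_inr_val] at e1 e2
    have := p.isLt; have := q.isLt; omega

lemma exp_submatrix {α β : Type*} [Fintype α] [DecidableEq α] [Fintype β] [DecidableEq β]
    (e : α ≃ β) (M : Matrix β β ℝ) :
    exp (M.submatrix e e) = (exp M).submatrix e e := by
  letI : SeminormedRing (Matrix β β ℝ) := Matrix.linftyOpSemiNormedRing
  letI : NormedRing (Matrix β β ℝ) := Matrix.linftyOpNormedRing
  letI : NormedAlgebra ℝ (Matrix β β ℝ) := Matrix.linftyOpNormedAlgebra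
  letI : NormedAlgebra ℚ (Matrix β β ℝ) := Matrix.linftyOpNormedAlgebra
  letI : SeminormedRing (Matrix α α ℝ) := Matrix.linftyOpSemiNormedRing
  letI : NormedRing (Matrix α α ℝ) := Matrix.linftyOpNormedRing
  letI : NormedAlgebra ℝ (Matrix α α ℝ) := Matrix.linftyOpNormedAlgebra
  letI : NormedAlgebra ℚ (Matrix α α ℝ) := Matrix.linftyOpNormedAlgebra
  have hc : Continuous (fun N : Matrix β β ℝ => N.submatrix e e) := by
    apply continuous_matrix
    intro i j
    exact (continuous_apply (e j)).comp (continuous_apply (e i))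
  have h := map_exp ((Matrix.reindexAlgEquiv ℝ ℝ e.symm).toRingEquiv.toRingHom) hc M
  have h' := h.symm
  simp only [RingHom.coe_coe, AlgEquiv.coe_ringEquiv, Matrix.reindexAlgEquiv_apply, Matrix.reindex_apply, Equiv.symm_symm, RingEquiv.toRingHom_eq_coe] at h'
  convert h' using 2 <;> rfl

noncomputable def fromBlocksHom (p q : ℕ) :
    (Matrix (Fin p) (Fin p) ℝ × Matrix (Fin q) (Fin q) ℝ) →+*
      Matrix (Fin p ⊕ Fin q) (Fin p ⊕ Fin q) ℝ where
  toFun X := Matrix.fromBlocks X.1 0 0 X.2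
  map_one' := Matrix.fromBlocks_one
  map_mul' X Y := by simp [Matrix.fromBlocks_multiply]
  map_zero' := by simp [Matrix.fromBlocks_zero]
  map_add' X Y := by simp [Matrix.fromBlocks_add]

lemma exp_fromBlocks {p q : ℕ} (X : Matrix (Fin p) (Fin p) ℝ) (Y : Matrix (Fin q) (Fin q) ℝ) :
    exp (Matrix.fromBlocks X 0 0 Y) = Matrix.fromBlocks (exp X) 0 0 (exp Y) := by
  letI : SeminormedRing (Matrix (Fin p) (Fin p) ℝ) := Matrix.linftyOpSemiNormedRing
  letI : NormedRing (Matrix (Fin p) (Fin p) ℝ) := Matrix.linftyOpNormedRing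
  letI : NormedAlgebra ℝ (Matrix (Fin p) (Fin p) ℝ) := Matrix.linftyOpNormedAlgebra
  letI : NormedAlgebra ℚ (Matrix (Fin p) (Fin p) ℝ) := Matrix.linftyOpNormedAlgebra
  letI : SeminormedRing (Matrix (Fin q) (Fin q) ℝ) := Matrix.linftyOpSemiNormedRing
  letI : NormedRing (Matrix (Fin q) (Fin q) ℝ) := Matrix.linftyOpNormedRing
  letI : NormedAlgebra ℝ (Matrix (Fin q) (Fin q) ℝ) := Matrix.linftyOpNormedAlgebra
  letI : NormedAlgebra ℚ (Matrix (Fin q) (Fin q) ℝ) := Matrix.linftyOpNormedAlgebra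
  letI : SeminormedRing (Matrix (Fin p ⊕ Fin q) (Fin p ⊕ Fin q) ℝ) :=
    Matrix.linftyOpSemiNormedRing
  letI : NormedRing (Matrix (Fin p ⊕ Fin q) (Fin p ⊕ Fin q) ℝ) := Matrix.linftyOpNormedRing
  letI : NormedAlgebra ℝ (Matrix (Fin p ⊕ Fin q) (Fin p ⊕ Fin q) ℝ) :=
    Matrix.linftyOpNormedAlgebra
  letI : NormedAlgebra ℚ (Matrix (Fin p ⊕ Fin q) (Fin p ⊕ Fin q) ℝ) :=
    Matrix.linftyOpNormedAlgebra
  have hc : Continuous (fromBlocksHom p q) := by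
    apply continuous_matrix
    rintro (i | i) (j | j)
    · exact (continuous_apply j).comp ((continuous_apply i).comp continuous_fst)
    · exact continuous_const
    · exact continuous_const
    · exact (continuous_apply j).comp ((continuous_apply i).comp continuous_snd)
  have h := map_exp (fromBlocksHom p q) hc (X, Y)
  have h1 : (exp ((X, Y) : _ × _)).1 = exp X := Prod.fst_exp (X, Y)
  have h2 : (exp ((X, Y) : _ × _)).2 = exp Y := Prod.snd_exp (X, Y)
  rw [show (fromBlocksHom p q) (X, Y) = Matrix.fromBlocks X 0 0 Y from rfl] at h
  have h' := h.symm
  rw [show ∀ Z : Matrix (Fin p) (Fin p) ℝ × Matrix (Fin q) (Fin q) ℝ,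
    (fromBlocksHom p q) Z = Matrix.fromBlocks Z.1 0 0 Z.2 from fun _ => rfl] at h'
  convert h' using 2
  rfl
  rfl
  exact h1.symm
  exact h2.symm

end CentroAux

open CentroAux in
/-- A centrosymmetric real matrix `A` has a real centrosymmetric logarithm iff both
diagonal blocks `A1` (of size `⌈n/2⌉`) and `A2` (of size `⌊n/2⌋`) of
`S_n⁻¹ A S_n` admit real logarithms. -/
theorem centrosymmetric_log_iff_blocks_log {n : ℕ} (A : Matrix (Fin n) (Fin n) ℝ)
    (hA : exchangeMatrix n * A * exchangeMatrix n = A) :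
    let k := (n + 1) / 2
    let F := (fourierMatrix n)⁻¹ * A * fourierMatrix n
    let A1 : Matrix (Fin k) (Fin k) ℝ :=
      F.submatrix (Fin.castLE (by omega)) (Fin.castLE (by omega))
    let A2 : Matrix (Fin (n - k)) (Fin (n - k)) ℝ :=
      F.submatrix (fun i => (⟨k + i.val, by have := i.isLt; omega⟩ : Fin n))
                  (fun i => (⟨k + i.val, by have := i.isLt; omega⟩ : Fin n))
    (∃ Q : Matrix (Fin n) (Fin n) ℝ,
        exchangeMatrix n * Q * exchangeMatrix n = Q ∧ NormedSpace.exp Q = A) ↔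
      ((∃ L1 : Matrix (Fin k) (Fin k) ℝ, NormedSpace.exp L1 = A1) ∧
       (∃ L2 : Matrix (Fin (n - k)) (Fin (n - k)) ℝ, NormedSpace.exp L2 = A2)) := by
  intro k F A1 A2
  have hk : k = (n + 1) / 2 := rfl
  have hSinv : (fourierMatrix n)⁻¹ = finv n := Matrix.inv_eq_left_inv finv_mul
  have hF : F = finv n * A * fourierMatrix n := by
    rw [show F = (fourierMatrix n)⁻¹ * A * fourierMatrix n from rfl, hSinv]
  set u : (Matrix (Fin n) (Fin n) ℝ)ˣ :=
    ⟨fourierMatrix n, finv n, mul_finv, finv_mul⟩ with hu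
  have hFb : IsBlocky F := by rw [hF]; exact blocky_conj A hA
  have hA1 : A1 = (toB F).toBlocks₁₁ := by
    ext i j
    show F (Fin.castLE (by omega) i) (Fin.castLE (by omega) j)
        = F (blockEquiv n (Sum.inl i)) (blockEquiv n (Sum.inl j))
    congr 1
  have hA2 : A2 = (toB F).toBlocks₂₂ := by
    ext i j
    show F ⟨k + i.val, by have := i.isLt; omega⟩ ⟨k + j.val, by have := j.isLt; omega⟩
        = F (blockEquiv n (Sum.inr i)) (blockEquiv n (Sum.inr j))
    congr 1
  constructor
  · rintro ⟨Q, hQc, hQe⟩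
    have hGb : IsBlocky (finv n * Q * fourierMatrix n) := blocky_conj Q hQc
    set G := finv n * Q * fourierMatrix n with hG
    have hexpG : NormedSpace.exp G = F := by
      have h5 : NormedSpace.exp (finv n * Q * fourierMatrix n)
          = finv n * NormedSpace.exp Q * fourierMatrix n :=
        Matrix.exp_units_conj' u Q
      rw [hG, h5, hQe, hF]
    have hsplit : toB G = Matrix.fromBlocks (toB G).toBlocks₁₁ 0 0 (toB G).toBlocks₂₂ :=
      toB_eq_fromBlocks hGb
    have hexpB : NormedSpace.exp (toB G) = toB F := by
      rw [← hexpG]; exact exp_submatrix (blockEquiv n) G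
    refine ⟨⟨(toB G).toBlocks₁₁, ?_⟩, ⟨(toB G).toBlocks₂₂, ?_⟩⟩
    · rw [hA1, ← hexpB]
      conv_rhs => rw [hsplit]
      rw [exp_fromBlocks, Matrix.toBlocks_fromBlocks₁₁]
    · rw [hA2, ← hexpB]
      conv_rhs => rw [hsplit]
      rw [exp_fromBlocks, Matrix.toBlocks_fromBlocks₂₂]
  · rintro ⟨⟨L1, hL1⟩, ⟨L2, hL2⟩⟩
    set Gs := Matrix.fromBlocks L1 0 0 L2 with hGs
    set G := Gs.submatrix (blockEquiv n).symm (blockEquiv n).symm with hGdef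
    have hGt : toB G = Gs := by
      simp [toB, hGdef, Matrix.submatrix_submatrix, Equiv.symm_comp_self]
    have hGb : IsBlocky G := blocky_of_toB (by rw [hGt])
    refine ⟨fourierMatrix n * G * finv n, conj_blocky G hGb, ?_⟩
    have hexpQ : NormedSpace.exp (fourierMatrix n * G * finv n)
        = fourierMatrix n * NormedSpace.exp G * finv n :=
      Matrix.exp_units_conj u G
    have hexpG : NormedSpace.exp G = F := by
      have h1 : toB (NormedSpace.exp G) = NormedSpace.exp (toB G) :=
        (exp_submatrix (blockEquiv n) G).symm
      have h2 : toB F = Matrix.fromBlocks A1 0 0 A2 := by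
        rw [toB_eq_fromBlocks hFb, ← hA1, ← hA2]
      have h3 : toB (NormedSpace.exp G) = toB F := by
        rw [h1, hGt, hGs, exp_fromBlocks, hL1, hL2, h2]
      have h4 := congrArg
        (fun X => X.submatrix (blockEquiv n).symm (blockEquiv n).symm) h3
      simpa only [untoB] using h4
    rw [hexpQ, hexpG, hF]
    calc fourierMatrix n * (finv n * A * fourierMatrix n) * finv n
        = (fourierMatrix n * finv n) * (A * (fourierMatrix n * finv n)) := by
          simp only [Matrix.mul_assoc]
      _ = A := by rw [mul_finv, mul_one, one_mul]
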